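/- Let S be a finite nonempty set and let l, u : S → ℝ satisfy 0 ≤ l(s) ≤ u(s) ≤ 1 for all s ∈ S, and let D(l,u) = {p : S → ℝ | ∑_{s∈S} p(s) = 1 and l(s) ≤ p(s) ≤ u(s) for all s ∈ S}. A point p ∈ D(l,u) is an extreme point of D(l,u) if and only if there is at most one s ∈ S with l(s) < p(s) < u(s), i.e., p(s) ∈ {l(s), u(s)} for all but at most one coordinate. -/

import Mathlib

private lemma comb_eq_lower {a b x y c : ℝ} (ha : 0 < a) (hb : 0 < b) (hab : a + b = 1)
    (hx : c ≤ x) (hy : c ≤ y) (h : a * x + b * y = c) : x = c ∧ y = c := by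
  have key : a * (x - c) + b * (y - c) = 0 := by linear_combination h - c * hab
  have h1 : 0 ≤ a * (x - c) := mul_nonneg ha.le (sub_nonneg.2 hx)
  have h2 : 0 ≤ b * (y - c) := mul_nonneg hb.le (sub_nonneg.2 hy)
  have e1 : a * (x - c) = 0 := le_antisymm (by linarith) h1
  have e2 : b * (y - c) = 0 := le_antisymm (by linarith) h2
  constructor
  · rcases mul_eq_zero.1 e1 with h | h
    · exact absurd h ha.ne'
    · linarith
  · rcases mul_eq_zero.1 e2 with h | h
    · exact absurd h hb.ne'
    · linarith

private lemma comb_eq_upper {a b x y c : ℝ} (ha : 0 < a) (hb : 0 < b) (hab : a + b = 1)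
    (hx : x ≤ c) (hy : y ≤ c) (h : a * x + b * y = c) : x = c ∧ y = c := by
  have := comb_eq_lower ha hb hab (neg_le_neg hx) (neg_le_neg hy)
    (by linear_combination -h)
  constructor <;> linarith [this.1, this.2]

theorem extremePoint_iff_at_most_one_strict
    (S : Type*) [Fintype S] [Nonempty S]
    (l u : S → ℝ)
    (hbounds : ∀ s, 0 ≤ l s ∧ l s ≤ u s ∧ u s ≤ 1)
    (p : S → ℝ)
    (hp : p ∈ ({p : S → ℝ | (∑ s, p s) = 1 ∧ ∀ s, l s ≤ p s ∧ p s ≤ u s} : Set (S → ℝ))) :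
    p ∈ ({p : S → ℝ | (∑ s, p s) = 1 ∧ ∀ s, l s ≤ p s ∧ p s ≤ u s} :
          Set (S → ℝ)).extremePoints ℝ ↔
      ({s : S | l s < p s ∧ p s < u s} : Set S).Subsingleton := by
  classical
  obtain ⟨hpsum, hpb⟩ := hp
  constructor
  · -- extreme → at most one strict coordinate
    rintro ⟨-, hext⟩ s₁ hs₁ s₂ hs₂
    by_contra hne
    obtain ⟨h1l, h1u⟩ := hs₁
    obtain ⟨h2l, h2u⟩ := hs₂
    set ε : ℝ := min (min (p s₁ - l s₁) (u s₁ - p s₁)) (min (p s₂ - l s₂) (u s₂ - p s₂)) with hε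
    have hεpos : 0 < ε := by
      apply lt_min (lt_min (by linarith) (by linarith)) (lt_min (by linarith) (by linarith))
    have hε1l : ε ≤ p s₁ - l s₁ := le_trans (min_le_left _ _) (min_le_left _ _)
    have hε1u : ε ≤ u s₁ - p s₁ := le_trans (min_le_left _ _) (min_le_right _ _)
    have hε2l : ε ≤ p s₂ - l s₂ := le_trans (min_le_right _ _) (min_le_left _ _)
    have hε2u : ε ≤ u s₂ - p s₂ := le_trans (min_le_right _ _) (min_le_right _ _)
    set d : S → ℝ := fun s => if s = s₁ then ε else if s = s₂ then -ε else 0 with hd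
    have hdval : ∀ s, d s = if s = s₁ then ε else if s = s₂ then -ε else 0 := fun s => rfl
    have hdsum : (∑ s, d s) = 0 := by
      have hsplit : ∀ s, d s = (if s = s₁ then ε else 0) + (if s = s₂ then -ε else 0) := by
        intro s
        rw [hdval s]
        rcases eq_or_ne s s₁ with rfl | h1
        · rw [if_pos rfl, if_pos rfl, if_neg hne]; ring
        · rw [if_neg h1, if_neg h1]; ring
      rw [Finset.sum_congr rfl (fun s _ => hsplit s), Finset.sum_add_distrib,
        Finset.sum_ite_eq' Finset.univ s₁ (fun _ => ε),
        Finset.sum_ite_eq' Finset.univ s₂ (fun _ => -ε)]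
      simp
    set x : S → ℝ := fun s => p s + d s with hxdef
    set y : S → ℝ := fun s => p s - d s with hydef
    have hbnd : ∀ s, (l s ≤ x s ∧ x s ≤ u s) ∧ (l s ≤ y s ∧ y s ≤ u s) := by
      intro s
      have hb := hpb s
      have hxs : x s = p s + d s := rfl
      have hys : y s = p s - d s := rfl
      rcases eq_or_ne s s₁ with rfl | h1
      · have hv : d s = ε := by rw [hdval s, if_pos rfl]
        rw [hxs, hys, hv]
        refine ⟨⟨by linarith, by linarith⟩, by linarith, by linarith⟩
      · rcases eq_or_ne s s₂ with rfl | h2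
        · have hv : d s = -ε := by rw [hdval s, if_neg h1, if_pos rfl]
          rw [hxs, hys, hv]
          refine ⟨⟨by linarith, by linarith⟩, by linarith, by linarith⟩
        · have hv : d s = 0 := by rw [hdval s, if_neg h1, if_neg h2]
          rw [hxs, hys, hv]
          refine ⟨⟨by linarith, by linarith⟩, by linarith, by linarith⟩
    have hxmem : x ∈ ({p : S → ℝ | (∑ s, p s) = 1 ∧ ∀ s, l s ≤ p s ∧ p s ≤ u s} : Set (S → ℝ)) := by
      refine ⟨?_, fun s => (hbnd s).1⟩
      simp only [hxdef]
      rw [Finset.sum_add_distrib, hpsum, hdsum]; ring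
    have hymem : y ∈ ({p : S → ℝ | (∑ s, p s) = 1 ∧ ∀ s, l s ≤ p s ∧ p s ≤ u s} : Set (S → ℝ)) := by
      refine ⟨?_, fun s => (hbnd s).2⟩
      simp only [hydef]
      rw [Finset.sum_sub_distrib, hpsum, hdsum]; ring
    have hopen : p ∈ openSegment ℝ x y := by
      refine ⟨1/2, 1/2, by norm_num, by norm_num, by norm_num, ?_⟩
      funext s
      simp only [hxdef, hydef, Pi.add_apply, Pi.smul_apply, smul_eq_mul]
      ring
    have := hext hxmem hymem hopen
    have hcontra : x s₁ = p s₁ := by rw [this]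
    have : x s₁ = p s₁ + ε := by
      show p s₁ + d s₁ = p s₁ + ε
      rw [hdval s₁, if_pos rfl]
    linarith [hcontra, this]
  · -- at most one strict coordinate → extreme
    intro hsub
    refine ⟨⟨hpsum, hpb⟩, ?_⟩
    rintro x ⟨hxsum, hxb⟩ y ⟨hysum, hyb⟩ ⟨a, b, ha, hb, hab, hcomb⟩
    -- coordinates outside the strict set agree
    have heq : ∀ s, s ∉ ({s : S | l s < p s ∧ p s < u s} : Set S) → x s = p s ∧ y s = p s := by
      intro s hs
      simp only [Set.mem_setOf_eq, not_and_or, not_lt] at hs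
      have hcs : a * x s + b * y s = p s := by
        have := congrFun hcomb s
        simpa using this
      rcases hs with h | h
      · have hls : p s = l s := le_antisymm h (hpb s).1
        rw [hls] at hcs ⊢
        exact comb_eq_lower ha hb hab (hxb s).1 (hyb s).1 hcs
      · have hus : p s = u s := le_antisymm (hpb s).2 h
        rw [hus] at hcs ⊢
        exact comb_eq_upper ha hb hab (hxb s).2 (hyb s).2 hcs
    -- x = y everywhere
    have hxyeq : x = p ∧ y = p := by
      by_cases hem : ∃ s₀, s₀ ∈ ({s : S | l s < p s ∧ p s < u s} : Set S)
      · obtain ⟨s₀, hs₀⟩ := hem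
        have hrest : ∀ s, s ≠ s₀ → x s = p s ∧ y s = p s := by
          intro s hs
          by_cases hmem : s ∈ ({s : S | l s < p s ∧ p s < u s} : Set S)
          · exact absurd (hsub hmem hs₀) hs
          · exact heq s hmem
        have hsx : x s₀ = p s₀ := by
          have h1 : (∑ s, x s) = 1 := hxsum
          have h2 : (∑ s, p s) = 1 := hpsum
          have : (∑ s, (x s - p s)) = 0 := by
            rw [Finset.sum_sub_distrib, h1, h2]; ring
          rw [← Finset.add_sum_erase _ _ (Finset.mem_univ s₀)] at this
          have hz : (∑ s ∈ Finset.univ.erase s₀, (x s - p s)) = 0 := by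
            apply Finset.sum_eq_zero
            intro s hs
            have := (hrest s (Finset.ne_of_mem_erase hs)).1
            linarith
          linarith [this, hz]
        have hsy : y s₀ = p s₀ := by
          have hcs : a * x s₀ + b * y s₀ = p s₀ := by
            have := congrFun hcomb s₀
            simpa using this
          rw [hsx] at hcs
          have hz : b * (y s₀ - p s₀) = 0 := by linear_combination hcs - p s₀ * hab
          rcases mul_eq_zero.1 hz with h | h
          · exact absurd h hb.ne'
          · linarith
        constructor <;> funext s <;> rcases eq_or_ne s s₀ with rfl | hs
        · exact hsx
        · exact (hrest s hs).1
        · exact hsy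
        · exact (hrest s hs).2
      · push_neg at hem
        constructor <;> funext s
        · exact (heq s (hem s)).1
        · exact (heq s (hem s)).2
    exact hxyeq.1
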